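/- Let P ⊆ ℝ^n be a rational polyhedron, Δ a regular triangulation of P, and f : ver(Δ) → ℚ^m a map defined on the vertices of Δ such that den(f(v)) divides den(v) for every v ∈ ver(Δ). Then there exists a unique Z-map η : P → ℝ^m such that (1) η is affine on each simplex of Δ, and (2) η restricted to ver(Δ) equals f. -/

import Mathlib

open scoped BigOperators

noncomputable section

/-- `x ∈ ℝ^n` is a rational point: all its coordinates are rational. -/
def IsRationalPoint {n : ℕ} (x : Fin n → ℝ) : Prop := ∀ i, ∃ q : ℚ, x i = (q : ℝ)

/-- `den x` : the least common denominator of the coordinates of a rational point `x`. -/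
noncomputable def den {n : ℕ} (x : Fin n → ℝ) : ℕ :=
  sInf {d : ℕ | 0 < d ∧ ∀ i, ∃ z : ℤ, (d : ℝ) * x i = (z : ℝ)}

/-- The homogeneous correspondent `ṽ = den(v)·(v,1) ∈ ℤ^{n+1}` of a rational point,
viewed as a real vector (its entries are integers when `v` is rational). -/
noncomputable def homCorr {n : ℕ} (x : Fin n → ℝ) : Fin (n + 1) → ℝ :=
  Fin.snoc (fun i => (den x : ℝ) * x i) (den x)

/-- The finite set `V` is the vertex set of a rational simplex. -/
def IsRationalSimplex {n : ℕ} (V : Finset (Fin n → ℝ)) : Prop :=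
  (∀ v ∈ V, IsRationalPoint v) ∧
    AffineIndependent ℝ (fun v : V => (v : Fin n → ℝ))

/-- The finite set `V` is the vertex set of a regular rational simplex: the homogeneous
correspondents of its vertices can be extended to a basis of the free abelian group `ℤ^{n+1}`. -/
def IsRegularSimplex {n : ℕ} (V : Finset (Fin n → ℝ)) : Prop :=
  IsRationalSimplex V ∧
    ∃ (b : Module.Basis (Fin (n + 1)) ℤ (Fin (n + 1) → ℤ)) (f : V → Fin (n + 1)),
      Function.Injective f ∧
        ∀ v : V, (fun i => ((b (f v) i : ℤ) : ℝ)) = homCorr (v : Fin n → ℝ)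

/-- An indexed family of points is the vertex family of a regular rational simplex. -/
def IsRegularFamily {n k : ℕ} (x : Fin k → (Fin n → ℝ)) : Prop :=
  (∀ i, IsRationalPoint (x i)) ∧ AffineIndependent ℝ x ∧
    ∃ (b : Module.Basis (Fin (n + 1)) ℤ (Fin (n + 1) → ℤ)) (f : Fin k → Fin (n + 1)),
      Function.Injective f ∧ ∀ i, (fun j => ((b (f i) j : ℤ) : ℝ)) = homCorr (x i)

/-- A (finite, geometric) simplicial complex, presented by the vertex sets of its simplexes. -/
def IsSimplicialComplex {n : ℕ} (K : Finset (Finset (Fin n → ℝ))) : Prop :=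
  (∀ V ∈ K, V.Nonempty ∧ AffineIndependent ℝ (fun v : V => (v : Fin n → ℝ))) ∧
  (∀ V ∈ K, ∀ W, W ⊆ V → W.Nonempty → W ∈ K) ∧
  (∀ V ∈ K, ∀ W ∈ K,
    convexHull ℝ (V : Set (Fin n → ℝ)) ∩ convexHull ℝ (W : Set (Fin n → ℝ)) =
      convexHull ℝ ((V : Set (Fin n → ℝ)) ∩ (W : Set (Fin n → ℝ))))

/-- The support of a simplicial complex: the union of its simplexes. -/
def complexSupport {n : ℕ} (K : Finset (Finset (Fin n → ℝ))) : Set (Fin n → ℝ) :=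
  ⋃ V ∈ K, convexHull ℝ (V : Set (Fin n → ℝ))

/-- The set of vertices of a simplicial complex. -/
def complexVerts {n : ℕ} (K : Finset (Finset (Fin n → ℝ))) : Set (Fin n → ℝ) :=
  ⋃ V ∈ K, (V : Set (Fin n → ℝ))

/-- `K` is a triangulation of `P`: a simplicial complex all of whose simplexes are rational,
with support `P`. -/
def IsTriangulation {n : ℕ} (K : Finset (Finset (Fin n → ℝ))) (P : Set (Fin n → ℝ)) : Prop :=
  IsSimplicialComplex K ∧ (∀ V ∈ K, IsRationalSimplex V) ∧ complexSupport K = P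

/-- `K` is a regular triangulation of `P`: all its simplexes are regular. -/
def IsRegularTriangulation {n : ℕ} (K : Finset (Finset (Fin n → ℝ)))
    (P : Set (Fin n → ℝ)) : Prop :=
  IsTriangulation K P ∧ ∀ V ∈ K, IsRegularSimplex V

/-- `K` is a subdivision of `Δ`: each simplex of `K` is contained in some simplex of `Δ`. -/
def IsSubdivision {n : ℕ} (K Δ : Finset (Finset (Fin n → ℝ))) : Prop :=
  ∀ V ∈ K, ∃ W ∈ Δ, convexHull ℝ (V : Set (Fin n → ℝ)) ⊆ convexHull ℝ (W : Set (Fin n → ℝ))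

/-- `K` is a strongly regular triangulation of `P`: a regular triangulation all of whose
maximal simplexes have vertices whose denominators have greatest common divisor 1. -/
def IsStronglyRegularTriangulation {n : ℕ} (K : Finset (Finset (Fin n → ℝ)))
    (P : Set (Fin n → ℝ)) : Prop :=
  IsRegularTriangulation K P ∧
    ∀ V ∈ K, (∀ W ∈ K, V ⊆ W → W = V) → Finset.gcd V den = 1

/-- `P ⊆ ℝ^n` is a rational polyhedron: a finite union of convex hulls of
finite sets of rational points. -/
def IsRationalPolyhedron {n : ℕ} (P : Set (Fin n → ℝ)) : Prop :=
  ∃ 𝒱 : Finset (Finset (Fin n → ℝ)),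
    (∀ V ∈ 𝒱, ∀ v ∈ V, IsRationalPoint v) ∧
    P = ⋃ V ∈ 𝒱, convexHull ℝ (V : Set (Fin n → ℝ))

/-- `η` is a Z-map on `P`: continuous on `P` and piecewise (affine with integer
coefficients), with finitely many pieces. -/
def IsZMap {n m : ℕ} (P : Set (Fin n → ℝ)) (η : (Fin n → ℝ) → (Fin m → ℝ)) : Prop :=
  ContinuousOn η P ∧
    ∃ L : List (Matrix (Fin m) (Fin n) ℤ × (Fin m → ℤ)),
      ∀ x ∈ P, ∃ l ∈ L, η x = fun i => (∑ j, (l.1 i j : ℝ) * x j) + (l.2 i : ℝ)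

/-- A Z-map from `P` into `Q`. -/
def IsZMapTo {n m : ℕ} (P : Set (Fin n → ℝ)) (Q : Set (Fin m → ℝ))
    (η : (Fin n → ℝ) → (Fin m → ℝ)) : Prop :=
  IsZMap P η ∧ Set.MapsTo η P Q

/-- `η` is a Z-homeomorphism of `P` onto `Q`: a bijective Z-map whose inverse is a Z-map. -/
def IsZHomeo {n m : ℕ} (P : Set (Fin n → ℝ)) (Q : Set (Fin m → ℝ))
    (η : (Fin n → ℝ) → (Fin m → ℝ)) : Prop :=
  IsZMapTo P Q η ∧ Set.BijOn η P Q ∧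
    ∃ μ, IsZMapTo Q P μ ∧ Set.LeftInvOn μ η P ∧ Set.RightInvOn μ η Q

/-- `η` is a strict Z-map from `P` to `Q`: injective and a Z-homeomorphism onto its image. -/
def IsStrictZMap {n m : ℕ} (P : Set (Fin n → ℝ)) (Q : Set (Fin m → ℝ))
    (η : (Fin n → ℝ) → (Fin m → ℝ)) : Prop :=
  IsZMapTo P Q η ∧ Set.InjOn η P ∧ IsZHomeo P (η '' P) η

/-- `η` coincides with a single affine map on the set `S`. -/
def AffineOnSet {n m : ℕ} (η : (Fin n → ℝ) → (Fin m → ℝ)) (S : Set (Fin n → ℝ)) : Prop :=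
  ∃ (M : Matrix (Fin m) (Fin n) ℝ) (b : Fin m → ℝ),
    ∀ x ∈ S, η x = fun i => (∑ j, M i j * x j) + b i

end


lemma den_spec {n : ℕ} (x : Fin n → ℝ) (hx : IsRationalPoint x) :
    0 < den x ∧ ∀ i, ∃ z : ℤ, (den x : ℝ) * x i = (z : ℝ) := by
  have hne : {d : ℕ | 0 < d ∧ ∀ i, ∃ z : ℤ, (d : ℝ) * x i = (z : ℝ)}.Nonempty := by
    choose q hq using hx
    refine ⟨∏ i, (q i).den, Finset.prod_pos fun i _ => (q i).pos, fun i => ?_⟩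
    obtain ⟨k, hk⟩ : (q i).den ∣ ∏ j, (q j).den := Finset.dvd_prod_of_mem _ (Finset.mem_univ i)
    refine ⟨(q i).num * k, ?_⟩
    rw [hq i, hk]
    have hden : ((q i).den : ℝ) ≠ 0 := Nat.cast_ne_zero.mpr (q i).den_nz
    have hcast : ((q i) : ℝ) = ((q i).num : ℝ) / ((q i).den : ℝ) := by
      rw [Rat.cast_def]
    rw [hcast]
    push_cast
    field_simp
  exact Nat.sInf_mem hne

lemma affine_eqOn_hull {n m : ℕ} (M₁ M₂ : Matrix (Fin m) (Fin n) ℝ) (c₁ c₂ : Fin m → ℝ)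
    (s : Set (Fin n → ℝ))
    (h : ∀ x ∈ s, ∀ i, (∑ j, M₁ i j * x j) + c₁ i = (∑ j, M₂ i j * x j) + c₂ i) :
    ∀ x ∈ convexHull ℝ s, ∀ i, (∑ j, M₁ i j * x j) + c₁ i = (∑ j, M₂ i j * x j) + c₂ i := by
  have hconv : Convex ℝ {x : Fin n → ℝ |
      ∀ i, (∑ j, M₁ i j * x j) + c₁ i = (∑ j, M₂ i j * x j) + c₂ i} := by
    intro a ha b hb p q hp hq hpq
    have hq' : q = 1 - p := by linarith
    subst hq'
    intro i
    have h1 := ha i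
    have h2 := hb i
    have e : ∀ M : Matrix (Fin m) (Fin n) ℝ,
        (∑ j, M i j * (p • a + (1 - p) • b) j)
          = p * (∑ j, M i j * a j) + (1 - p) * (∑ j, M i j * b j) := by
      intro M
      rw [Finset.mul_sum, Finset.mul_sum, ← Finset.sum_add_distrib]
      refine Finset.sum_congr rfl fun j _ => ?_
      simp only [Pi.add_apply, Pi.smul_apply, smul_eq_mul]
      ring
    rw [e, e]
    linear_combination p * h1 + (1 - p) * h2
  exact fun x hx => convexHull_min (fun y hy => h y hy) hconv hx

lemma simplex_affine {n m : ℕ} (V : Finset (Fin n → ℝ)) (hV : IsRegularSimplex V)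
    (f : (Fin n → ℝ) → (Fin m → ℝ))
    (hd : ∀ v ∈ V, 0 < den v)
    (hw : ∀ v ∈ V, ∃ w : Fin m → ℤ, ∀ i, (den v : ℝ) * f v i = (w i : ℝ)) :
    ∃ (M : Matrix (Fin m) (Fin n) ℤ) (c : Fin m → ℤ),
      ∀ v ∈ V, ∀ i, f v i = (∑ j, (M i j : ℝ) * v j) + (c i : ℝ) := by
  classical
  obtain ⟨-, b, g, hginj, hgb⟩ := hV
  choose w hwspec using hw
  set target : Fin (n + 1) → (Fin m → ℤ) := fun j =>
    if h : ∃ v : V, g v = j then w h.choose h.choose.2 else 0 with htarget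
  set T : (Fin (n + 1) → ℤ) →ₗ[ℤ] (Fin m → ℤ) := b.constr ℤ target with hT
  set M' : Matrix (Fin m) (Fin (n + 1)) ℤ :=
    fun i j => T (fun j' => if j = j' then 1 else 0) i with hM'
  have hTapp : ∀ u : Fin (n + 1) → ℤ, ∀ i, T u i = ∑ j, M' i j * u j := by
    intro u i
    conv_lhs => rw [pi_eq_sum_univ u]
    rw [map_sum, Finset.sum_apply]
    refine Finset.sum_congr rfl fun j _ => ?_
    rw [map_smul]
    simp [hM', mul_comm]
  have hTg : ∀ v : V, T (b (g v)) = w v v.2 := by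
    intro v
    rw [hT, Module.Basis.constr_basis]
    have hex : ∃ u : V, g u = g v := ⟨v, rfl⟩
    rw [htarget]
    simp only [dif_pos hex]
    have heq : hex.choose = v := hginj hex.choose_spec
    rw [heq]
  refine ⟨fun i j => M' i (Fin.castSucc j), fun i => M' i (Fin.last n), ?_⟩
  intro v hv i
  have hden : (den v : ℝ) ≠ 0 := Nat.cast_ne_zero.mpr (hd v hv).ne'
  have h1 : ((T (b (g ⟨v, hv⟩)) : Fin m → ℤ) i : ℝ) = (den v : ℝ) * f v i := by
    rw [hTg ⟨v, hv⟩]; exact (hwspec v hv i).symm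
  have h2 : ((T (b (g ⟨v, hv⟩)) : Fin m → ℤ) i : ℝ)
      = ∑ j, (M' i j : ℝ) * homCorr v j := by
    rw [hTapp]
    push_cast
    refine Finset.sum_congr rfl fun j _ => ?_
    rw [← congrFun (hgb ⟨v, hv⟩) j]
  rw [h1] at h2
  have h3 : ∑ j, (M' i j : ℝ) * homCorr v j
      = (den v : ℝ) * ((∑ j, ((M' i (Fin.castSucc j) : ℤ) : ℝ) * v j)
          + ((M' i (Fin.last n) : ℤ) : ℝ)) := by
    rw [Fin.sum_univ_castSucc]
    simp only [homCorr, Fin.snoc_castSucc, Fin.snoc_last]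
    rw [mul_add, Finset.mul_sum]
    congr 1
    · exact Finset.sum_congr rfl fun j _ => by ring
    · ring
  rw [h3] at h2
  exact mul_left_cancel₀ hden h2
/-- Corollary (ExtensionToZed): given a regular triangulation `Δ` of `P` and a map `f` on the
vertices of `Δ` with rational values whose denominators divide those of the vertices, there is a
unique Z-map `η : P → ℝ^m` affine on each simplex of `Δ` and agreeing with `f` on the vertices. -/
theorem statement8 {n m : ℕ} {P : Set (Fin n → ℝ)} (hP : IsRationalPolyhedron P)
    (Δ : Finset (Finset (Fin n → ℝ))) (hΔ : IsRegularTriangulation Δ P)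
    (f : (Fin n → ℝ) → (Fin m → ℝ))
    (hf : ∀ v ∈ complexVerts Δ, IsRationalPoint (f v) ∧ den (f v) ∣ den v) :
    ∃ η : (Fin n → ℝ) → (Fin m → ℝ),
      (IsZMap P η ∧ (∀ V ∈ Δ, AffineOnSet η (convexHull ℝ (V : Set (Fin n → ℝ)))) ∧
        ∀ v ∈ complexVerts Δ, η v = f v) ∧
      ∀ η' : (Fin n → ℝ) → (Fin m → ℝ),
        (IsZMap P η' ∧ (∀ V ∈ Δ, AffineOnSet η' (convexHull ℝ (V : Set (Fin n → ℝ)))) ∧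
          ∀ v ∈ complexVerts Δ, η' v = f v) →
        Set.EqOn η' η P := by
  classical
  obtain ⟨⟨⟨hne, hface, hint⟩, hratS, hsupp⟩, hregS⟩ := hΔ
  have hvert : ∀ V ∈ Δ, ∀ v ∈ V, v ∈ complexVerts Δ := by
    intro V hV v hv
    exact Set.mem_biUnion hV hv
  have hdpos : ∀ V ∈ Δ, ∀ v ∈ V, 0 < den v := by
    intro V hV v hv
    exact (den_spec v ((hratS V hV).1 v hv)).1
  have hwint : ∀ V ∈ Δ, ∀ v ∈ V, ∃ w : Fin m → ℤ, ∀ i, (den v : ℝ) * f v i = (w i : ℝ) := by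
    intro V hV v hv
    obtain ⟨hfr, hdvd⟩ := hf v (hvert V hV v hv)
    obtain ⟨k, hk⟩ := hdvd
    choose z hz using (den_spec (f v) hfr).2
    refine ⟨fun i => k * z i, fun i => ?_⟩
    rw [hk]
    push_cast
    rw [mul_comm ((den (f v) : ℝ)) (k : ℝ), mul_assoc, hz i]
  have key : ∀ V, V ∈ Δ → ∃ (M : Matrix (Fin m) (Fin n) ℤ) (c : Fin m → ℤ),
      ∀ v ∈ V, ∀ i, f v i = (∑ j, (M i j : ℝ) * v j) + (c i : ℝ) :=
    fun V hV => simplex_affine V (hregS V hV) f (hdpos V hV) (hwint V hV)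
  choose Mv cv hMc using key
  have hagree : ∀ V (hV : V ∈ Δ) W (hW : W ∈ Δ), ∀ x,
      x ∈ convexHull ℝ (V : Set (Fin n → ℝ)) → x ∈ convexHull ℝ (W : Set (Fin n → ℝ)) →
      ∀ i, (∑ j, ((Mv V hV) i j : ℝ) * x j) + ((cv V hV) i : ℝ)
        = (∑ j, ((Mv W hW) i j : ℝ) * x j) + ((cv W hW) i : ℝ) := by
    intro V hV W hW x hxV hxW
    have hx : x ∈ convexHull ℝ ((V : Set (Fin n → ℝ)) ∩ (W : Set (Fin n → ℝ))) := by
      rw [← hint V hV W hW]; exact ⟨hxV, hxW⟩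
    refine affine_eqOn_hull _ _ _ _ _ ?_ x hx
    rintro y ⟨hyV, hyW⟩ i
    rw [← hMc V hV y hyV i, ← hMc W hW y hyW i]
  set η : (Fin n → ℝ) → (Fin m → ℝ) := fun x =>
    if h : ∃ V, V ∈ Δ ∧ x ∈ convexHull ℝ (V : Set (Fin n → ℝ)) then
      fun i => (∑ j, ((Mv h.choose h.choose_spec.1) i j : ℝ) * x j)
        + ((cv h.choose h.choose_spec.1) i : ℝ)
    else 0 with hηdef
  have hηV : ∀ V (hV : V ∈ Δ), ∀ x ∈ convexHull ℝ (V : Set (Fin n → ℝ)),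
      η x = fun i => (∑ j, ((Mv V hV) i j : ℝ) * x j) + ((cv V hV) i : ℝ) := by
    intro V hV x hx
    have h : ∃ V', V' ∈ Δ ∧ x ∈ convexHull ℝ (V' : Set (Fin n → ℝ)) := ⟨V, hV, hx⟩
    simp only [hηdef]
    rw [dif_pos h]
    funext i
    exact hagree h.choose h.choose_spec.1 V hV x h.choose_spec.2 hx i
  have hPs : P = ⋃ V ∈ Δ, convexHull ℝ (V : Set (Fin n → ℝ)) := by
    rw [← hsupp]; rfl
  have hηf : ∀ v ∈ complexVerts Δ, η v = f v := by
    intro v hv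
    obtain ⟨V, hV, hvV⟩ := Set.mem_iUnion₂.mp hv
    rw [hηV V hV v (subset_convexHull ℝ _ hvV)]
    funext i
    exact (hMc V hV v hvV i).symm
  have hcont : ContinuousOn η P := by
    have hU : P = ⋃ V : {V // V ∈ Δ}, convexHull ℝ ((V : Finset (Fin n → ℝ)) : Set (Fin n → ℝ)) := by
      rw [hPs]; ext x; simp [Set.mem_iUnion]
    rw [hU]
    refine LocallyFinite.continuousOn_iUnion (locallyFinite_of_finite _) ?_ ?_
    · intro V
      exact ((V : Finset (Fin n → ℝ)).finite_toSet.isCompact_convexHull (𝕜 := ℝ)).isClosed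
    · intro V
      have hc : Continuous fun x : Fin n → ℝ =>
          (fun i => (∑ j, ((Mv V.1 V.2) i j : ℝ) * x j) + ((cv V.1 V.2) i : ℝ)) :=
        continuous_pi fun i =>
          ((continuous_finset_sum _ fun j _ => continuous_const.mul (continuous_apply j)).add
            continuous_const)
      exact hc.continuousOn.congr (hηV V.1 V.2)
  refine ⟨η, ⟨⟨hcont, ?_⟩, ?_, hηf⟩, ?_⟩
  · refine ⟨Δ.attach.toList.map fun V => (Mv V.1 V.2, cv V.1 V.2), ?_⟩
    intro x hx
    rw [hPs] at hx
    obtain ⟨V, hV, hxV⟩ := Set.mem_iUnion₂.mp hx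
    refine ⟨(Mv V hV, cv V hV), ?_, ?_⟩
    · exact List.mem_map.mpr ⟨⟨V, hV⟩, by simp, rfl⟩
    · exact hηV V hV x hxV
  · intro V hV
    exact ⟨fun i j => ((Mv V hV) i j : ℝ), fun i => ((cv V hV) i : ℝ), hηV V hV⟩
  · rintro η' ⟨hz', haff', hvert'⟩ x hx
    rw [hPs] at hx
    obtain ⟨V, hV, hxV⟩ := Set.mem_iUnion₂.mp hx
    obtain ⟨M1, b1, hM1⟩ := haff' V hV
    have hagr : ∀ y ∈ (V : Set (Fin n → ℝ)), ∀ i,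
        (∑ j, M1 i j * y j) + b1 i
          = (∑ j, ((Mv V hV) i j : ℝ) * y j) + ((cv V hV) i : ℝ) := by
      intro y hy i
      have h1 := congrFun (hM1 y (subset_convexHull ℝ _ hy)) i
      have h2 := congrFun (hvert' y (hvert V hV y hy)) i
      rw [← h1, h2, hMc V hV y hy i]
    have hfin := affine_eqOn_hull M1 _ b1 _ _ hagr x hxV
    rw [hηV V hV x hxV, hM1 x hxV]
    funext i
    exact hfin i
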